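/- Let μ be a Radon measure on ℝ^d. For balls (or cubes) Q ⊂ R ⊂ T with nontrivial intersection, define δ(Q,R) = 1 + ∫_{2R \ 2Q} |x_Q − y|^{−n} dμ(y), where x_Q is the center of Q and 2Q is the concentric dilate. Then max{δ(Q,R), δ(R,T)} ≤ C·δ(Q,T) for a constant C depending only on n and d. -/

import Mathlib

open MeasureTheory Metric
open scoped ENNReal

lemma dist_add_le_of_closedBall_subset {E : Type*} [NormedAddCommGroup E] [NormedSpace ℝ E]
    [Nontrivial E] {x y : E} {r₁ r₂ : ℝ} (hr : 0 ≤ r₁)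
    (h : closedBall x r₁ ⊆ closedBall y r₂) : dist x y + r₁ ≤ r₂ := by
  rcases eq_or_ne x y with rfl | hxy
  · obtain ⟨u, hu⟩ := exists_norm_eq E hr
    have hmem : x + u ∈ closedBall x r₁ := by
      simp [mem_closedBall, dist_eq_norm, hu]
    have := h hmem
    simpa [mem_closedBall, dist_eq_norm, hu] using this
  · set w := x - y with hw
    have hw0 : w ≠ 0 := sub_ne_zero.2 hxy
    have hwn : 0 < ‖w‖ := norm_pos_iff.2 hw0
    set c := r₁ / ‖w‖ with hc
    have hc0 : 0 ≤ c := div_nonneg hr hwn.le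
    have hmem : x + c • w ∈ closedBall x r₁ := by
      simp only [mem_closedBall, dist_eq_norm, add_sub_cancel_left, norm_smul,
        Real.norm_eq_abs, abs_of_nonneg hc0, hc]
      rw [abs_of_nonneg (div_nonneg hr hwn.le), div_mul_cancel₀ _ hwn.ne']
    have h2 := h hmem
    have hzy : x + c • w - y = (1 + c) • w := by
      rw [add_smul, one_smul, hw]; abel
    rw [mem_closedBall, dist_eq_norm, hzy, norm_smul, Real.norm_eq_abs,
      abs_of_nonneg (by linarith : (0:ℝ) ≤ 1 + c), add_mul, one_mul, hc,
      div_mul_cancel₀ _ hwn.ne'] at h2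
    rw [dist_eq_norm, ← hw]
    linarith

/-- The quantity `δ(Q,R) = 1 + ∫_{2R \ 2Q} |x_Q − y|^{−n} dμ(y)` for balls
`Q = B(xQ, rQ)` and `R = B(xR, rR)`. -/
noncomputable def ballDelta {d : ℕ} (μ : Measure (EuclideanSpace ℝ (Fin d))) (n : ℝ)
    (xQ : EuclideanSpace ℝ (Fin d)) (rQ : ℝ)
    (xR : EuclideanSpace ℝ (Fin d)) (rR : ℝ) : ℝ≥0∞ :=
  1 + ∫⁻ y in closedBall xR (2 * rR) \ closedBall xQ (2 * rQ),
        ENNReal.ofReal (1 / dist xQ y ^ n) ∂μ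

/-- for a measure of `n`-polynomial growth and nested balls `Q ⊆ R ⊆ T`,
`max{δ(Q,R), δ(R,T)} ≤ C δ(Q,T)` with `C` depending only on `n` and `d`. -/
theorem delta_max_nested (d : ℕ) (n : ℝ) (hn : 0 < n) :
    ∃ C : ℝ≥0∞, 0 < C ∧ C ≠ ⊤ ∧
      ∀ μ : Measure (EuclideanSpace ℝ (Fin d)),
        (∀ x ∈ {x : EuclideanSpace ℝ (Fin d) | ∀ ρ > 0, 0 < μ (ball x ρ)},
          ∀ r > 0, μ (ball x r) ≤ ENNReal.ofReal (r ^ n)) →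
        ∀ (xQ xR xT : EuclideanSpace ℝ (Fin d)) (rQ rR rT : ℝ),
          0 < rQ →
          closedBall xQ rQ ⊆ closedBall xR rR →
          closedBall xR rR ⊆ closedBall xT rT →
          max (ballDelta μ n xQ rQ xR rR) (ballDelta μ n xR rR xT rT) ≤
            C * ballDelta μ n xQ rQ xT rT := by
  set C : ℝ≥0∞ := ENNReal.ofReal ((3/2) ^ n) with hCdef
  have hC1 : (1:ℝ≥0∞) ≤ C := by
    rw [hCdef, ← ENNReal.ofReal_one]
    exact ENNReal.ofReal_le_ofReal (Real.one_le_rpow (by norm_num) hn.le)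
  refine ⟨C, lt_of_lt_of_le one_pos hC1 |>.trans_le' zero_le |>.trans_le le_rfl, ?_, ?_⟩
  · exact ENNReal.ofReal_ne_top
  intro μ _ xQ xR xT rQ rR rT hrQ hQR hRT
  have hone : ∀ (a : EuclideanSpace ℝ (Fin d)) (b : ℝ) (c : EuclideanSpace ℝ (Fin d)) (e : ℝ),
      (1:ℝ≥0∞) ≤ ballDelta μ n a b c e := fun _ _ _ _ => le_add_right le_rfl
  rcases subsingleton_or_nontrivial (EuclideanSpace ℝ (Fin d)) with hsub | hnt
  · -- trivial (single-point) space
    have hrR : 0 ≤ rR := le_trans dist_nonneg (hQR (mem_closedBall_self hrQ.le))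
    have h2Q : closedBall xQ (2*rQ) = Set.univ :=
      Set.eq_univ_of_forall fun z => by
        simp [mem_closedBall, Subsingleton.elim z xQ, mul_nonneg (by norm_num : (0:ℝ) ≤ 2) hrQ.le]
    have h2R : closedBall xR (2*rR) = Set.univ :=
      Set.eq_univ_of_forall fun z => by
        simp [mem_closedBall, Subsingleton.elim z xR, mul_nonneg (by norm_num : (0:ℝ) ≤ 2) hrR]
    have e1 : ballDelta μ n xQ rQ xR rR = 1 := by simp [ballDelta, h2Q]
    have e2 : ballDelta μ n xR rR xT rT = 1 := by simp [ballDelta, h2R]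
    rw [e1, e2, max_self]
    calc (1:ℝ≥0∞) = 1 * 1 := (one_mul 1).symm
      _ ≤ C * ballDelta μ n xQ rQ xT rT := mul_le_mul' hC1 (hone _ _ _ _)
  · have hQR' : dist xQ xR + rQ ≤ rR := dist_add_le_of_closedBall_subset hrQ.le hQR
    have hd1 : (0:ℝ) ≤ dist xQ xR := dist_nonneg
    have hrR : 0 < rR := by linarith
    have hRT' : dist xR xT + rR ≤ rT := dist_add_le_of_closedBall_subset hrR.le hRT
    have hd2 : (0:ℝ) ≤ dist xR xT := dist_nonneg
    have h2QR : closedBall xQ (2*rQ) ⊆ closedBall xR (2*rR) :=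
      closedBall_subset_closedBall' (by linarith)
    have h2RT : closedBall xR (2*rR) ⊆ closedBall xT (2*rT) :=
      closedBall_subset_closedBall' (by linarith)
    have key1 : ballDelta μ n xQ rQ xR rR ≤ ballDelta μ n xQ rQ xT rT :=
      add_le_add_right (lintegral_mono_set (Set.diff_subset_diff_left h2RT)) 1
    -- measurability of the target integrand
    have hgm : Measurable fun y : EuclideanSpace ℝ (Fin d) =>
        C * ENNReal.ofReal (1 / dist xQ y ^ n) := by
      apply Measurable.const_mul
      apply Measurable.ennreal_ofReal
      simp only [one_div]
      exact ((continuous_const.dist continuous_id).measurable.pow measurable_const).inv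
    -- pointwise bound on 2T \ 2R
    have hpt : ∀ y ∈ closedBall xT (2*rT) \ closedBall xR (2*rR),
        ENNReal.ofReal (1 / dist xR y ^ n) ≤ C * ENNReal.ofReal (1 / dist xQ y ^ n) := by
      rintro y ⟨-, hy⟩
      have hty : 2 * rR < dist xR y := by
        simpa [mem_closedBall, not_le, dist_comm] using hy
      have hdQy : rR < dist xQ y := by
        have := dist_triangle xR xQ y
        rw [dist_comm xR xQ] at this
        linarith [dist_triangle xQ xR y]
      have hdQy0 : 0 < dist xQ y := lt_trans hrR hdQy
      have hle : dist xQ y ≤ (3/2) * dist xR y := by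
        have h1 : dist xQ y ≤ dist xQ xR + dist xR y := dist_triangle xQ xR y
        linarith
      have hreal : 1 / dist xR y ^ n ≤ (3/2) ^ n * (1 / dist xQ y ^ n) := by
        have htpos : (0:ℝ) < dist xR y := by linarith
        have htn : (0:ℝ) < dist xR y ^ n := Real.rpow_pos_of_pos htpos n
        have hqn : (0:ℝ) < dist xQ y ^ n := Real.rpow_pos_of_pos hdQy0 n
        rw [mul_one_div, div_le_div_iff₀ htn hqn, one_mul]
        calc dist xQ y ^ n ≤ ((3/2) * dist xR y) ^ n :=
              Real.rpow_le_rpow hdQy0.le hle hn.le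
          _ = (3/2) ^ n * dist xR y ^ n :=
              Real.mul_rpow (by norm_num) htpos.le
      calc ENNReal.ofReal (1 / dist xR y ^ n)
          ≤ ENNReal.ofReal ((3/2) ^ n * (1 / dist xQ y ^ n)) :=
            ENNReal.ofReal_le_ofReal hreal
        _ = C * ENNReal.ofReal (1 / dist xQ y ^ n) :=
            ENNReal.ofReal_mul (Real.rpow_nonneg (by norm_num) n)
    have key2 : (∫⁻ y in closedBall xT (2*rT) \ closedBall xR (2*rR),
          ENNReal.ofReal (1 / dist xR y ^ n) ∂μ)
        ≤ C * ∫⁻ y in closedBall xT (2*rT) \ closedBall xQ (2*rQ),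
            ENNReal.ofReal (1 / dist xQ y ^ n) ∂μ := by
      calc (∫⁻ y in closedBall xT (2*rT) \ closedBall xR (2*rR),
              ENNReal.ofReal (1 / dist xR y ^ n) ∂μ)
          ≤ ∫⁻ y in closedBall xT (2*rT) \ closedBall xR (2*rR),
              C * ENNReal.ofReal (1 / dist xQ y ^ n) ∂μ :=
            setLIntegral_mono hgm hpt
        _ = C * ∫⁻ y in closedBall xT (2*rT) \ closedBall xR (2*rR),
              ENNReal.ofReal (1 / dist xQ y ^ n) ∂μ :=
            lintegral_const_mul' _ _ ENNReal.ofReal_ne_top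
        _ ≤ C * ∫⁻ y in closedBall xT (2*rT) \ closedBall xQ (2*rQ),
              ENNReal.ofReal (1 / dist xQ y ^ n) ∂μ :=
            mul_le_mul_right (lintegral_mono_set (Set.diff_subset_diff_right h2QR)) C
    refine max_le ?_ ?_
    · calc ballDelta μ n xQ rQ xR rR ≤ ballDelta μ n xQ rQ xT rT := key1
        _ = 1 * ballDelta μ n xQ rQ xT rT := (one_mul _).symm
        _ ≤ C * ballDelta μ n xQ rQ xT rT := mul_le_mul_left hC1 _
    · show (1 : ℝ≥0∞) + _ ≤ C * ((1:ℝ≥0∞) + _)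
      rw [mul_add, mul_one]
      exact add_le_add hC1 key2
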